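/- Let F_n ⋊ ℤ^{n-1} be the semidirect product where F_n is free on x_1,…,x_n, ℤ^{n-1} is free abelian on y_1,…,y_{n-1}, and the action is x_i^{y_j} = x_i^{x_j⁻¹} for j < i, x_i^{y_i} = x_i^{(x_i x_{i+1} ⋯ x_n)⁻¹}, and x_i^{y_j} = x_i for j > i. Setting p_i := x_i x_{i+1} ⋯ x_n (and p_{n+1} := 1), the elements p_1,…,p_n form a free basis of F_n and the action on them is p_i^{y_j} = p_i^{p_{j+1} p_j⁻¹} for j < i and p_i^{y_j} = p_i for j ≥ i. -/

import Mathlib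

namespace ActionInPBasisAux

variable {M N : Type*} [Monoid M] [Monoid N]

/-- The suffix product `f i * f (i+1) * ⋯ * f m`. -/
def sp (m : ℕ) (f : Fin (m + 1) → M) (i : ℕ) : M :=
  (((List.finRange (m + 1)).drop i).map f).prod

lemma filter_eq_drop (m : ℕ) (i : Fin (m + 1)) :
    (List.finRange (m + 1)).filter (fun k => i ≤ k) = (List.finRange (m + 1)).drop i.val := by
  conv_lhs => rw [← List.take_append_drop i.val (List.finRange (m + 1)), List.filter_append]
  rw [List.filter_eq_nil_iff.mpr, List.filter_eq_self.mpr, List.nil_append]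
  · intro k hk
    rw [List.mem_drop_iff_getElem] at hk
    obtain ⟨t, ht, rfl⟩ := hk
    simp only [List.getElem_finRange]
    simp [Fin.le_def, Fin.cast]
  · intro k hk
    obtain ⟨t, ht, rfl⟩ := List.mem_take_iff_getElem.mp hk
    simp only [List.getElem_finRange]
    simp only [decide_eq_true_eq, Fin.le_def, Fin.cast]
    simp at ht ⊢
    omega

lemma sp_top (m : ℕ) (f : Fin (m + 1) → M) : sp m f (m + 1) = 1 := by
  unfold sp
  rw [List.drop_eq_nil_of_le (by simp)]
  simp

lemma sp_succ (m : ℕ) (f : Fin (m + 1) → M) (i : ℕ) (h : i < m + 1) :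
    sp m f i = f ⟨i, h⟩ * sp m f (i + 1) := by
  unfold sp
  rw [List.drop_eq_getElem_cons (by simp; omega)]
  simp

lemma sp_map (m : ℕ) (F : M →* N) (f : Fin (m + 1) → M) (i : ℕ) :
    F (sp m f i) = sp m (F ∘ f) i := by
  unfold sp
  rw [← List.map_map, map_list_prod, List.map_map]

lemma sp_congr (m : ℕ) (f g : Fin (m + 1) → M) (i : ℕ)
    (h : ∀ k : Fin (m + 1), i ≤ (k : ℕ) → f k = g k) : sp m f i = sp m g i := by
  unfold sp
  congr 1
  apply List.map_congr_left
  intro k hk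
  rw [List.mem_drop_iff_getElem] at hk
  obtain ⟨t, ht, rfl⟩ := hk
  refine h _ ?_
  simp [List.getElem_finRange, Fin.cast]

end ActionInPBasisAux

open ActionInPBasisAux in
theorem action_in_p_basis {G : Type*} [Group G] (m : ℕ)
    (x p : Fin (m + 1) → G) (y : Fin m → G)
    (hy : ∀ j k, Commute (y j) (y k))
    (hp : ∀ i, p i = (((List.finRange (m + 1)).filter fun k => i ≤ k).map x).prod)
    (hxlt : ∀ (i : Fin (m + 1)) (j : Fin m), (j : ℕ) < (i : ℕ) →
      (y j)⁻¹ * x i * y j = x j.castSucc * x i * (x j.castSucc)⁻¹)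
    (hxeq : ∀ (i : Fin (m + 1)) (j : Fin m), (j : ℕ) = (i : ℕ) →
      (y j)⁻¹ * x i * y j = p i * x i * (p i)⁻¹)
    (hxgt : ∀ (i : Fin (m + 1)) (j : Fin m), (i : ℕ) < (j : ℕ) →
      (y j)⁻¹ * x i * y j = x i)
    (hbasis : ∃ e : FreeGroup (Fin (m + 1)) ≃* Subgroup.closure (Set.range x),
      ∀ i, ((e (FreeGroup.of i) : G) = x i)) :
    (∃ e' : FreeGroup (Fin (m + 1)) ≃* Subgroup.closure (Set.range x),
      ∀ i, ((e' (FreeGroup.of i) : G) = p i)) ∧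
    (∀ (i : Fin (m + 1)) (j : Fin m), (j : ℕ) < (i : ℕ) →
      (y j)⁻¹ * p i * y j =
        p j.castSucc * (p j.succ)⁻¹ * p i * p j.succ * (p j.castSucc)⁻¹) ∧
    (∀ (i : Fin (m + 1)) (j : Fin m), (i : ℕ) ≤ (j : ℕ) →
      (y j)⁻¹ * p i * y j = p i) := by
  have hp' : ∀ i, p i = sp m x i.val := by
    intro i
    rw [hp]
    unfold sp
    rw [← filter_eq_drop]
  -- conjugation of a suffix product `sp m x i` by `y j` when `j < i`
  have conj_gt : ∀ (j : Fin m) (i : ℕ), (j : ℕ) < i →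
      (y j)⁻¹ * sp m x i * y j = x j.castSucc * sp m x i * (x j.castSucc)⁻¹ := by
    intro j i hji
    set c : G →* G := (MulAut.conj (y j)⁻¹).toMonoidHom with hcdef
    have hc : ∀ g, c g = (y j)⁻¹ * g * y j := by
      intro g
      simp [hcdef, MulAut.conj_apply]
    set d : G →* G := (MulAut.conj (x j.castSucc)).toMonoidHom with hddef
    have hd : ∀ g, d g = x j.castSucc * g * (x j.castSucc)⁻¹ := by
      intro g
      simp [hddef, MulAut.conj_apply]
    have h1 : c (sp m x i) = sp m (c ∘ x) i := sp_map m c x i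
    have h2 : sp m (c ∘ x) i = sp m (d ∘ x) i := by
      apply sp_congr
      intro k hk
      simp only [Function.comp]
      rw [hc, hd]
      exact hxlt k j (lt_of_lt_of_le hji hk)
    have h3 : sp m (d ∘ x) i = d (sp m x i) := (sp_map m d x i).symm
    rw [← hc, ← hd, h1, h2, h3]
  refine ⟨?_, ?_, ?_⟩
  · -- free basis part
    obtain ⟨e, he⟩ := hbasis
    let F := FreeGroup (Fin (m + 1))
    let φ : F →* F := FreeGroup.lift (fun i => sp m FreeGroup.of i.val)
    let ψ : F →* F := FreeGroup.lift (fun i =>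
      if _h : (i : ℕ) < m then FreeGroup.of i * (FreeGroup.of ⟨i.val + 1, by omega⟩)⁻¹
      else FreeGroup.of i)
    have hφof : ∀ k : Fin (m + 1), φ (FreeGroup.of k) = sp m FreeGroup.of k.val :=
      fun k => FreeGroup.lift_apply_of
    have hψof : ∀ k : Fin (m + 1), ψ (FreeGroup.of k) =
        (if _h : (k : ℕ) < m then FreeGroup.of k * (FreeGroup.of ⟨k.val + 1, by omega⟩)⁻¹
         else FreeGroup.of k) := fun k => FreeGroup.lift_apply_of
    have ψsp : ∀ t : ℕ, ∀ i : ℕ, ∀ hi : i ≤ m, m - i ≤ t →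
        ψ (sp m FreeGroup.of i) = FreeGroup.of ⟨i, Nat.lt_succ_of_le hi⟩ := by
      intro t
      induction t with
      | zero =>
        intro i hi ht
        have h1 : sp m FreeGroup.of (i + 1) = 1 := by
          rw [show i + 1 = m + 1 by omega]
          exact sp_top m _
        rw [sp_succ m FreeGroup.of i (by omega), h1, mul_one, hψof]
        split
        next h => exact absurd (by simpa using h) (by omega)
        next h => rfl
      | succ t ih =>
        intro i hi ht
        rcases Nat.lt_or_ge i m with h | h
        · rw [sp_succ m FreeGroup.of i (by omega), map_mul,
            ih (i + 1) (by omega) (by omega), hψof]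
          split
          next hh => rw [inv_mul_cancel_right]
          next hh => exact absurd (by simpa using h) (by simpa using hh)
        · have h1 : sp m FreeGroup.of (i + 1) = 1 := by
            rw [show i + 1 = m + 1 by omega]
            exact sp_top m _
          rw [sp_succ m FreeGroup.of i (by omega), h1, mul_one, hψof]
          split
          next hh => exact absurd (by simpa using hh) (by omega)
          next hh => rfl
    have hψφ : ∀ a : F, ψ (φ a) = a := by
      have key : ψ.comp φ = MonoidHom.id F := by
        apply FreeGroup.ext_hom
        intro i
        simp only [MonoidHom.comp_apply, MonoidHom.id_apply]
        rw [hφof, ψsp m i.val (by omega) (by omega)]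
        rfl
      intro a
      exact congrFun (congrArg DFunLike.coe key) a
    have hφψ : ∀ a : F, φ (ψ a) = a := by
      have key : φ.comp ψ = MonoidHom.id F := by
        apply FreeGroup.ext_hom
        intro i
        simp only [MonoidHom.comp_apply, MonoidHom.id_apply]
        rw [hψof]
        split
        next h =>
          rw [map_mul, map_inv, hφof, hφof]
          rw [sp_succ m FreeGroup.of i.val (by omega)]
          simp only [Fin.val_mk]
          rw [mul_inv_cancel_right]
          rfl
        next h =>
          rw [hφof]
          rw [sp_succ m FreeGroup.of i.val (by omega),
            show (i : ℕ) + 1 = m + 1 by omega, sp_top, mul_one]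
          rfl
      intro a
      exact congrFun (congrArg DFunLike.coe key) a
    refine ⟨MulEquiv.trans
      { toFun := φ, invFun := ψ, left_inv := hψφ, right_inv := hφψ, map_mul' := map_mul φ }
      e, ?_⟩
    intro i
    show ((e (φ (FreeGroup.of i)) : G)) = p i
    rw [hφof]
    let E : F →* G := (Subgroup.closure (Set.range x)).subtype.comp e.toMonoidHom
    show E (sp m FreeGroup.of i.val) = p i
    rw [sp_map, hp' i]
    apply sp_congr
    intro k _
    exact he k
  · -- case j < i
    intro i j hji
    have hmk : (⟨(j : ℕ), by omega⟩ : Fin (m + 1)) = j.castSucc := by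
      apply Fin.ext
      simp
    rw [hp' i, conj_gt j i.val hji, hp' j.castSucc, hp' j.succ,
      Fin.coe_castSucc, Fin.val_succ, sp_succ m x j.val (by omega), hmk]
    group
  · -- case i ≤ j
    intro i j hij
    have hmk : (⟨(j : ℕ), by omega⟩ : Fin (m + 1)) = j.castSucc := by
      apply Fin.ext
      simp
    have base : (y j)⁻¹ * sp m x j.val * y j = sp m x j.val := by
      rw [sp_succ m x j.val (by omega), hmk]
      have h1 : (y j)⁻¹ * (x j.castSucc * sp m x (j.val + 1)) * y j
          = ((y j)⁻¹ * x j.castSucc * y j) * ((y j)⁻¹ * sp m x (j.val + 1) * y j) := by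
        group
      rw [h1, hxeq j.castSucc j (by simp), conj_gt j (j.val + 1) (by omega),
        hp' j.castSucc, Fin.coe_castSucc, sp_succ m x j.val (by omega), hmk]
      group
    have aux : ∀ t : ℕ, ∀ i' : ℕ, i' ≤ j.val → j.val - i' ≤ t →
        (y j)⁻¹ * sp m x i' * y j = sp m x i' := by
      intro t
      induction t with
      | zero =>
        intro i' hi' ht
        have : i' = j.val := by omega
        rw [this]
        exact base
      | succ t ih =>
        intro i' hi' ht
        rcases Nat.lt_or_ge i' j.val with h | h
        · have hi'm : i' < m + 1 := by omega
          rw [sp_succ m x i' hi'm]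
          have h1 : (y j)⁻¹ * (x ⟨i', hi'm⟩ * sp m x (i' + 1)) * y j
              = ((y j)⁻¹ * x ⟨i', hi'm⟩ * y j) * ((y j)⁻¹ * sp m x (i' + 1) * y j) := by
            group
          rw [h1, hxgt ⟨i', hi'm⟩ j (by simpa), ih (i' + 1) (by omega) (by omega)]
        · have : i' = j.val := by omega
          rw [this]
          exact base
    rw [hp' i]
    exact aux m i.val hij (by omega)
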